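/- arXiv:1806.10357 — 2 statements merged into one kernel-verified Lean document; each statement's English description precedes it below -/
import Mathlib

section
/- For every integer n ≥ 2, under the uniform probability measure on {−1,1}^n, the sum of the individual variances of the squared spectral amplitudes over the first half of the spectrum satisfies ∑_{j=0}^{⌊n/2⌋−1} V[|f_j|²] = ⌊n/2⌋·(n² − 2n) + n². -/
open Finset Real

/-- Expectation with respect to the uniform probability measure on `{-1,1}^n`:
`E[g] = 2^{-n} ∑_{x ∈ {-1,1}^n} g(x)`. -/
noncomputable def expect (n : ℕ) (g : (Fin n → ℝ) → ℝ) : ℝ :=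
  (∑ x : Fin n → ({-1, 1} : Finset ℝ), g (fun k => (x k : ℝ))) / 2 ^ n

/-- Variance with respect to the uniform probability measure on `{-1,1}^n`:
`V[g] = E[g²] − E[g]²`. -/
noncomputable def var (n : ℕ) (g : (Fin n → ℝ) → ℝ) : ℝ :=
  expect n (fun x => g x ^ 2) - (expect n g) ^ 2

/-- The squared amplitude of the `j`-th discrete Fourier coefficient:
`|f_j|² = (∑_k x_k cos(2πkj/n))² + (∑_k x_k sin(2πkj/n))²`. -/
noncomputable def absSqDFT (n : ℕ) (j : ℕ) (x : Fin n → ℝ) : ℝ :=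
  (∑ k : Fin n, x k * Real.cos (2 * Real.pi * k * j / n)) ^ 2 +
    (∑ k : Fin n, x k * Real.sin (2 * Real.pi * k * j / n)) ^ 2

lemma sum_cube_prod (n : ℕ) (f : Fin n → ℝ → ℝ) :
    ∑ x : Fin n → ({-1, 1} : Finset ℝ), ∏ k, f k (x k : ℝ)
      = ∏ k, (f k (-1) + f k 1) := by
  rw [← Fintype.prod_sum (fun k (a : ({-1,1} : Finset ℝ)) => f k (a : ℝ))]
  refine Finset.prod_congr rfl fun k _ => ?_
  rw [Finset.sum_coe_sort _ (fun a => f k a),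
    Finset.sum_pair (by norm_num : (-1:ℝ) ≠ 1)]

lemma expect_prod_pow (n : ℕ) (e : Fin n → ℕ) :
    expect n (fun x => ∏ k, x k ^ e k)
      = if ∀ k, Even (e k) then 1 else 0 := by
  unfold _root_.expect
  rw [sum_cube_prod n (fun k a => a ^ e k)]
  have h : ∀ k : Fin n, ((-1:ℝ)) ^ e k + 1 ^ e k = if Even (e k) then 2 else 0 := by
    intro k
    by_cases he : Even (e k)
    · rw [he.neg_one_pow]; norm_num [he]
    · rw [Odd.neg_one_pow (Nat.not_even_iff_odd.1 he)]; simp [he]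
  split_ifs with hall
  · rw [Finset.prod_congr rfl fun k _ => h k]
    simp only [hall, if_true]
    rw [Finset.prod_const]
    simp
  · push_neg at hall
    obtain ⟨k, hk⟩ := hall
    rw [Finset.prod_eq_zero (Finset.mem_univ k)]
    · simp
    · rw [h k]; simp [hk]

lemma expect_congr (n : ℕ) (g₁ g₂ : (Fin n → ℝ) → ℝ)
    (h : ∀ x : Fin n → ℝ, (∀ k, x k = -1 ∨ x k = 1) → g₁ x = g₂ x) :
    expect n g₁ = expect n g₂ := by
  unfold _root_.expect
  congr 1
  refine Finset.sum_congr rfl fun x _ => ?_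
  refine h _ fun k => ?_
  have := (x k).2
  simp only [Finset.mem_insert, Finset.mem_singleton] at this
  exact this

lemma expect_sum (n : ℕ) {ι : Type*} (s : Finset ι) (g : ι → (Fin n → ℝ) → ℝ) :
    expect n (fun x => ∑ p ∈ s, g p x) = ∑ p ∈ s, expect n (g p) := by
  unfold _root_.expect
  rw [Finset.sum_comm, Finset.sum_div]

lemma expect_const_mul (n : ℕ) (c : ℝ) (g : (Fin n → ℝ) → ℝ) :
    expect n (fun x => c * g x) = c * expect n g := by
  unfold _root_.expect
  rw [← Finset.mul_sum, mul_div_assoc]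

lemma expect_const (n : ℕ) (c : ℝ) : expect n (fun _ => c) = c := by
  unfold _root_.expect
  rw [Finset.sum_const, nsmul_eq_mul]
  have hcard : (Finset.univ : Finset (Fin n → ({-1,1} : Finset ℝ))).card = 2 ^ n := by
    rw [Finset.card_univ, Fintype.card_fun]
    congr 1
    · rw [Fintype.card_coe]
      rw [Finset.card_insert_of_notMem (by norm_num), Finset.card_singleton]
    · exact Fintype.card_fin n
  rw [hcard]
  field_simp
  push_cast
  ring

lemma prod_pow_single (n : ℕ) (x : Fin n → ℝ) (k : Fin n) :
    ∏ m, x m ^ (if m = k then 1 else 0) = x k := by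
  rw [Finset.prod_congr rfl (fun m _ => by split_ifs with h <;> simp [h] :
    ∀ m ∈ Finset.univ, x m ^ (if m = k then 1 else 0) = if m = k then x m else 1)]
  simp

lemma expect_pair (n : ℕ) (k l : Fin n) :
    expect n (fun x => x k * x l) = if k = l then 1 else 0 := by
  have key : ∀ x : Fin n → ℝ, x k * x l
      = ∏ m, x m ^ ((if m = k then 1 else 0) + (if m = l then 1 else 0)) := by
    intro x
    simp only [pow_add, Finset.prod_mul_distrib, prod_pow_single]
  rw [show (fun x : Fin n → ℝ => x k * x l) = fun x => ∏ m, x m ^ ((if m = k then 1 else 0) + (if m = l then 1 else 0)) from funext key]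
  rw [expect_prod_pow]
  congr 1
  simp only [eq_iff_iff]
  constructor
  · intro h
    have := h k
    simp only [if_pos rfl] at this
    by_cases hkl : k = l
    · exact hkl
    · simp [hkl] at this
  · rintro rfl
    intro m
    by_cases h : m = k <;> simp [h]

lemma expect_four (n : ℕ) (k l m p : Fin n) (hkl : k ≠ l) (hmp : m ≠ p) :
    expect n (fun x => x k * x l * (x m * x p))
      = (if k = m ∧ l = p then 1 else 0) + (if k = p ∧ l = m then 1 else 0) := by
  have key : ∀ x : Fin n → ℝ, x k * x l * (x m * x p)
      = ∏ i, x i ^ ((if i = k then 1 else 0) + (if i = l then 1 else 0)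
          + ((if i = m then 1 else 0) + (if i = p then 1 else 0))) := by
    intro x
    simp only [pow_add, Finset.prod_mul_distrib, prod_pow_single]
  rw [show (fun x : Fin n → ℝ => x k * x l * (x m * x p)) = _ from funext key,
    expect_prod_pow]
  by_cases h1 : k = m ∧ l = p
  · obtain ⟨rfl, rfl⟩ := h1
    have hall : ∀ i : Fin n, Even ((if i = k then 1 else 0) + (if i = l then 1 else 0)
        + ((if i = k then 1 else 0) + (if i = l then 1 else 0))) := by
      intro i
      by_cases h : i = k <;> by_cases h' : i = l <;> simp [h, h', Nat.even_add]
    rw [if_pos hall]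
    simp [hkl, Ne.symm hkl]
  by_cases h2 : k = p ∧ l = m
  · obtain ⟨rfl, rfl⟩ := h2
    have hall : ∀ i : Fin n, Even ((if i = k then 1 else 0) + (if i = l then 1 else 0)
        + ((if i = l then 1 else 0) + (if i = k then 1 else 0))) := by
      intro i
      by_cases h : i = k <;> by_cases h' : i = l <;> simp [h, h', Nat.even_add]
    rw [if_pos hall]
    simp [hkl, Ne.symm hkl]
  · rw [if_neg, if_neg h1, if_neg h2]
    · simp
    · intro hall
      have hk := hall k
      have hl := hall l
      by_cases a1 : k = m <;> by_cases a2 : k = p <;> by_cases a3 : l = m <;>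
        by_cases a4 : l = p <;>
        first
        | (exact h1 ⟨a1, a4⟩)
        | (exact h2 ⟨a2, a3⟩)
        | (exact hmp (a1.symm.trans a2))
        | (exact hmp (a3.symm.trans a4))
        | (exact hkl (a1.trans a3.symm))
        | (exact hkl (a2.trans a4.symm))
        | (revert hk hl; simp [hkl, Ne.symm hkl, a1, a2, a3, a4, Nat.even_iff])

lemma cos_sum_zero (n m : ℕ) (h0 : 0 < m) (hmn : m < n) :
    (∑ k : Fin n, Real.cos (2 * Real.pi * m * k / n)) = 0 ∧
    (∑ k : Fin n, Real.sin (2 * Real.pi * m * k / n)) = 0 := by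
  have hn0 : (n : ℝ) ≠ 0 := Nat.cast_ne_zero.2 (by omega)
  have hn0C : (n : ℂ) ≠ 0 := Nat.cast_ne_zero.2 (by omega)
  set z : ℂ := Complex.exp ((2 * Real.pi * m / n : ℝ) * Complex.I) with hz
  have hz1 : z ≠ 1 := by
    rw [hz, Ne, Complex.exp_eq_one_iff]
    rintro ⟨c, hc⟩
    have h2 : ((2 * Real.pi * m / n : ℝ) : ℂ) * Complex.I
        = (((c : ℝ) * (2 * Real.pi) : ℝ) : ℂ) * Complex.I := by
      rw [hc]; push_cast; ring
    have hre : (2 * Real.pi * m / n : ℝ) = (c : ℝ) * (2 * Real.pi) := by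
      exact_mod_cast mul_right_cancel₀ Complex.I_ne_zero h2
    have hπ : (0:ℝ) < Real.pi := Real.pi_pos
    have hmc : (m : ℝ) = (c : ℝ) * n := by
      rw [div_eq_iff hn0] at hre
      nlinarith [hre]
    have hmcz : (m : ℤ) = c * n := by exact_mod_cast hmc
    rcases le_or_gt c 0 with h | h
    · nlinarith [hmcz, (by exact_mod_cast h0 : (0:ℤ) < (m:ℤ)), (by positivity : (0:ℤ) ≤ (n:ℤ))]
    · have : (1:ℤ) ≤ c := h
      have : (m : ℤ) ≥ n := by nlinarith [hmcz]
      omega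
  have hzn : z ^ n = 1 := by
    rw [hz, ← Complex.exp_nat_mul, Complex.exp_eq_one_iff]
    refine ⟨m, ?_⟩
    push_cast
    field_simp
  have hsum : ∑ k ∈ Finset.range n, z ^ k = 0 := by
    rw [geom_sum_eq hz1, hzn]
    simp
  have hcast : ∀ k : ℕ, z ^ k = Complex.exp ((2 * Real.pi * m * k / n : ℝ) * Complex.I) := by
    intro k
    rw [hz, ← Complex.exp_nat_mul]
    congr 1
    push_cast
    ring
  have hsum2 : ∑ k : Fin n, Complex.exp ((2 * Real.pi * m * k / n : ℝ) * Complex.I) = 0 := by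
    rw [Fin.sum_univ_eq_sum_range (fun k => Complex.exp ((2 * Real.pi * m * (k:ℕ) / n : ℝ) * Complex.I))]
    rw [← Finset.sum_congr rfl fun k _ => hcast k]
    exact hsum
  constructor
  · have h := congrArg Complex.re hsum2
    rw [Complex.re_sum] at h
    simpa only [Complex.exp_ofReal_mul_I_re, Complex.zero_re] using h
  · have h := congrArg Complex.im hsum2
    rw [Complex.im_sum] at h
    simpa only [Complex.exp_ofReal_mul_I_im, Complex.zero_im] using h

lemma expect_add (n : ℕ) (g₁ g₂ : (Fin n → ℝ) → ℝ) :
    expect n (fun x => g₁ x + g₂ x) = expect n g₁ + expect n g₂ := by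
  unfold _root_.expect
  rw [Finset.sum_add_distrib, add_div]

lemma var_absSqDFT (n : ℕ) (j : ℕ) :
    var n (absSqDFT n j) =
      2 * ((∑ k : Fin n, ∑ l : Fin n,
        (Real.cos (2 * Real.pi * k * j / n) * Real.cos (2 * Real.pi * l * j / n)
          + Real.sin (2 * Real.pi * k * j / n) * Real.sin (2 * Real.pi * l * j / n)) ^ 2)
        - n) := by
  set c : Fin n → ℝ := fun k => Real.cos (2 * Real.pi * k * j / n) with hc
  set s : Fin n → ℝ := fun k => Real.sin (2 * Real.pi * k * j / n) with hs
  set b : Fin n × Fin n → ℝ := fun p => c p.1 * c p.2 + s p.1 * s p.2 with hb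
  set D : Finset (Fin n × Fin n) := (Finset.univ : Finset (Fin n)).offDiag with hD
  have hDmem : ∀ p : Fin n × Fin n, p ∈ D ↔ p.1 ≠ p.2 := by
    intro p
    simp [hD, Finset.mem_offDiag]
  have hbkk : ∀ k : Fin n, b (k, k) = 1 := by
    intro k
    have := Real.sin_sq_add_cos_sq (2 * Real.pi * k * j / n)
    simp only [hb]
    nlinarith [this]
  have hbswap : ∀ p : Fin n × Fin n, b (p.2, p.1) = b p := by
    intro p; simp only [hb]; ring
  -- algebraic identity on the whole space
  have hsq : ∀ x : Fin n → ℝ, absSqDFT n j x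
      = ∑ p ∈ Finset.univ ×ˢ Finset.univ, b p * (x p.1 * x p.2) := by
    intro x
    unfold absSqDFT
    rw [sq (∑ k : Fin n, x k * c k), sq (∑ k : Fin n, x k * s k),
      Finset.sum_mul_sum, Finset.sum_mul_sum, Finset.sum_product]
    rw [← Finset.sum_add_distrib]
    refine Finset.sum_congr rfl fun k _ => ?_
    rw [← Finset.sum_add_distrib]
    refine Finset.sum_congr rfl fun l _ => ?_
    simp only [hb]
    ring
  -- on the cube: absSqDFT = n + off-diagonal part
  have hcube : ∀ x : Fin n → ℝ, (∀ k, x k = -1 ∨ x k = 1) →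
      absSqDFT n j x = n + ∑ p ∈ D, b p * (x p.1 * x p.2) := by
    intro x hx
    rw [hsq x, ← Finset.diag_union_offDiag (Finset.univ : Finset (Fin n)),
      Finset.sum_union (Finset.disjoint_diag_offDiag _), Finset.sum_diag]
    congr 1
    have : ∀ k : Fin n, b (k, k) * (x k * x k) = 1 := by
      intro k
      rw [hbkk k, one_mul]
      rcases hx k with h | h <;> rw [h] <;> norm_num
    rw [Finset.sum_congr rfl fun k _ => this k]
    simp
  -- first moment
  have E1 : expect n (absSqDFT n j) = n := by
    rw [expect_congr n _ _ hcube]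
    rw [show (fun x : Fin n → ℝ => (n : ℝ) + ∑ p ∈ D, b p * (x p.1 * x p.2))
      = fun x => (fun _ : Fin n → ℝ => (n:ℝ)) x + (fun x : Fin n → ℝ => ∑ p ∈ D, b p * (x p.1 * x p.2)) x from rfl,
      expect_add, expect_const, expect_sum]
    have : ∀ p ∈ D, expect n (fun x => b p * (x p.1 * x p.2)) = 0 := by
      intro p hp
      rw [expect_const_mul, expect_pair, if_neg ((hDmem p).1 hp), mul_zero]
    rw [Finset.sum_congr rfl this]
    simp
  -- second moment
  have E2 : expect n (fun x => absSqDFT n j x ^ 2)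
      = n ^ 2 + ∑ p ∈ D, 2 * b p ^ 2 := by
    have hexp : ∀ x : Fin n → ℝ, (∀ k, x k = -1 ∨ x k = 1) →
        absSqDFT n j x ^ 2
          = (n:ℝ)^2 + ((∑ p ∈ D, (2 * n * b p) * (x p.1 * x p.2))
            + ∑ p ∈ D, ∑ q ∈ D, (b p * b q) * (x p.1 * x p.2 * (x q.1 * x q.2))) := by
      intro x hx
      rw [hcube x hx, add_sq]
      have hmid : 2 * (n:ℝ) * (∑ p ∈ D, b p * (x p.1 * x p.2))
          = ∑ p ∈ D, (2 * n * b p) * (x p.1 * x p.2) := by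
        rw [Finset.mul_sum]
        exact Finset.sum_congr rfl fun p _ => by ring
      have hquart : (∑ p ∈ D, b p * (x p.1 * x p.2)) ^ 2
          = ∑ p ∈ D, ∑ q ∈ D, (b p * b q) * (x p.1 * x p.2 * (x q.1 * x q.2)) := by
        rw [sq, Finset.sum_mul_sum]
        exact Finset.sum_congr rfl fun p _ => Finset.sum_congr rfl fun q _ => by ring
      rw [hmid, hquart]
      ring
    rw [expect_congr n _ _ hexp, expect_add, _root_.expect_const, expect_add]
    congr 1
    rw [expect_sum]
    have hmid : ∀ p ∈ D, expect n (fun x => (2 * (n:ℝ) * b p) * (x p.1 * x p.2)) = 0 := by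
      intro p hp
      rw [expect_const_mul, expect_pair, if_neg ((hDmem p).1 hp), mul_zero]
    rw [Finset.sum_congr rfl hmid, Finset.sum_const, smul_zero, expect_sum, zero_add]
    refine Finset.sum_congr rfl fun p hp => ?_
    rw [expect_sum]
    have hq : ∀ q ∈ D, expect n (fun x => (b p * b q) * (x p.1 * x p.2 * (x q.1 * x q.2)))
        = (b p * b q) * ((if p.1 = q.1 ∧ p.2 = q.2 then 1 else 0)
            + (if p.1 = q.2 ∧ p.2 = q.1 then 1 else 0)) := by
      intro q hq
      rw [expect_const_mul, expect_four n p.1 p.2 q.1 q.2 ((hDmem p).1 hp) ((hDmem q).1 hq)]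
    rw [Finset.sum_congr rfl hq]
    have expand : ∀ q ∈ D, (b p * b q) * ((if p.1 = q.1 ∧ p.2 = q.2 then 1 else 0)
            + (if p.1 = q.2 ∧ p.2 = q.1 then 1 else 0))
        = (if q = p then b p * b q else 0) + (if q = (p.2, p.1) then b p * b q else 0) := by
      intro q _
      have h1 : (p.1 = q.1 ∧ p.2 = q.2) ↔ q = p := by
        rw [Prod.ext_iff]; tauto
      have h2 : (p.1 = q.2 ∧ p.2 = q.1) ↔ q = (p.2, p.1) := by
        rw [Prod.ext_iff]; constructor
        · rintro ⟨h, h'⟩; exact ⟨h'.symm, h.symm⟩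
        · rintro ⟨h, h'⟩; exact ⟨h'.symm, h.symm⟩
      rw [mul_add]
      congr 1
      · simp only [h1]; split_ifs <;> simp
      · simp only [h2]; split_ifs <;> simp
    rw [Finset.sum_congr rfl expand, Finset.sum_add_distrib,
      Finset.sum_ite_eq' D p (fun q => b p * b q),
      Finset.sum_ite_eq' D (p.2, p.1) (fun q => b p * b q),
      if_pos hp, if_pos (by rw [hDmem]; exact Ne.symm ((hDmem p).1 hp)), hbswap p]
    ring
  -- conclude
  unfold var
  rw [E1, E2]
  have hQ : ∑ p ∈ D, 2 * b p ^ 2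
      = 2 * ((∑ p ∈ Finset.univ ×ˢ Finset.univ, b p ^ 2) - n) := by
    rw [← Finset.diag_union_offDiag (Finset.univ : Finset (Fin n)),
      Finset.sum_union (Finset.disjoint_diag_offDiag _), Finset.sum_diag]
    have hdiag : (∑ k ∈ (Finset.univ : Finset (Fin n)), b (k, k) ^ 2) = (n : ℝ) := by
      simp only [hbkk, one_pow, Finset.sum_const, Finset.card_univ, Fintype.card_fin,
        nsmul_eq_mul, mul_one]
    rw [hdiag,
      show (n:ℝ) + (∑ x ∈ (Finset.univ : Finset (Fin n)).offDiag, b x ^ 2) - n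
        = ∑ x ∈ (Finset.univ : Finset (Fin n)).offDiag, b x ^ 2 from by ring,
      Finset.mul_sum]
  rw [hQ, Finset.sum_product]
  ring

lemma double_sum_zero (n : ℕ) :
    (∑ k : Fin n, ∑ l : Fin n,
      (Real.cos (2 * Real.pi * k * (0:ℕ) / n) * Real.cos (2 * Real.pi * l * (0:ℕ) / n)
        + Real.sin (2 * Real.pi * k * (0:ℕ) / n) * Real.sin (2 * Real.pi * l * (0:ℕ) / n)) ^ 2)
      = (n : ℝ) ^ 2 := by
  simp [Finset.sum_const, Finset.card_univ]
  ring

lemma double_sum_pos (n j : ℕ) (hj : 0 < j) (hjn : 2 * j < n) :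
    (∑ k : Fin n, ∑ l : Fin n,
      (Real.cos (2 * Real.pi * k * j / n) * Real.cos (2 * Real.pi * l * j / n)
        + Real.sin (2 * Real.pi * k * j / n) * Real.sin (2 * Real.pi * l * j / n)) ^ 2)
      = (n : ℝ) ^ 2 / 2 := by
  have hC := (cos_sum_zero n (2 * j) (by omega) hjn).1
  have hS := (cos_sum_zero n (2 * j) (by omega) hjn).2
  have step : ∀ k l : Fin n,
      (Real.cos (2 * Real.pi * k * j / n) * Real.cos (2 * Real.pi * l * j / n)
        + Real.sin (2 * Real.pi * k * j / n) * Real.sin (2 * Real.pi * l * j / n)) ^ 2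
      = 1/2 + (Real.cos (2 * Real.pi * (2*j : ℕ) * k / n) * Real.cos (2 * Real.pi * (2*j : ℕ) * l / n)
        + Real.sin (2 * Real.pi * (2*j : ℕ) * k / n) * Real.sin (2 * Real.pi * (2*j : ℕ) * l / n)) / 2 := by
    intro k l
    rw [← Real.cos_sub, ← Real.cos_sub, Real.cos_sq]
    congr 1
    rw [mul_div_assoc]
    congr 2
    push_cast
    ring
  rw [Finset.sum_congr rfl fun k _ => Finset.sum_congr rfl fun l _ => step k l]
  have inner : ∀ k : Fin n,
      (∑ l : Fin n, (1/2 + (Real.cos (2 * Real.pi * (2*j : ℕ) * k / n) * Real.cos (2 * Real.pi * (2*j : ℕ) * l / n)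
        + Real.sin (2 * Real.pi * (2*j : ℕ) * k / n) * Real.sin (2 * Real.pi * (2*j : ℕ) * l / n)) / 2))
      = (n : ℝ) / 2 := by
    intro k
    rw [Finset.sum_add_distrib, Finset.sum_const, Finset.card_univ, Fintype.card_fin,
      ← Finset.sum_div, Finset.sum_add_distrib, ← Finset.mul_sum, ← Finset.mul_sum,
      hC, hS]
    push_cast
    ring
  rw [Finset.sum_congr rfl fun k _ => inner k, Finset.sum_const, Finset.card_univ,
    Fintype.card_fin]
  push_cast
  ring

/-- The sum of the variances of the squared spectral amplitudes over the first half
of the spectrum: `∑_{j=0}^{⌊n/2⌋-1} V[|f_j|²] = ⌊n/2⌋·(n² − 2n) + n²`. -/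
theorem sum_variances_half_spectrum (n : ℕ) (hn : 2 ≤ n) :
    ∑ j ∈ Finset.range (n / 2), var n (absSqDFT n j) =
      ((n / 2 : ℕ) : ℝ) * ((n : ℝ) ^ 2 - 2 * n) + (n : ℝ) ^ 2 := by
  have h2 : 1 ≤ n / 2 := by omega
  have hv0 : var n (absSqDFT n 0) = 2 * ((n:ℝ)^2 - n) := by
    rw [var_absSqDFT, double_sum_zero]
  have hvj : ∀ j ∈ Finset.Ico 1 (n / 2), var n (absSqDFT n j) = (n:ℝ)^2 - 2*n := by
    intro j hj
    rw [Finset.mem_Ico] at hj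
    rw [var_absSqDFT, double_sum_pos n j (by omega) (by omega)]
    ring
  rw [Finset.range_eq_Ico, Finset.sum_eq_sum_Ico_succ_bot (by omega : 0 < n / 2),
    Finset.sum_congr rfl hvj, Finset.sum_const, Nat.card_Ico, hv0, nsmul_eq_mul,
    Nat.cast_sub h2]
  push_cast
  ring
end

section
/- Let m ≥ 2 be an integer and let P be the uniform probability measure on the simplex S = {y ∈ ℝ^m : y_j ≥ 0 for all j, and ∑_{j=0}^{m−1} y_j = 2m²}. For a threshold T with 0 ≤ T² ≤ m², let F_i and F_j (i ≠ j) be the indicator functions of {y_i ≤ T²} and {y_j ≤ T²} respectively. Then the covariance of F_i and F_j under P equals (1 − T²/m²)^{m−1} − (1 − T²/(2m²))^{2m−2}. -/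
open MeasureTheory Finset

/-- The simplex `S = {y ∈ ℝ^m : y_j ≥ 0 for all j, ∑_j y_j = s}` in Euclidean space. -/
def simplex (m : ℕ) (s : ℝ) : Set (EuclideanSpace ℝ (Fin m)) :=
  {y | (∀ j, 0 ≤ y j) ∧ ∑ j, y j = s}

/-- The uniform probability measure on the simplex: the `(m-1)`-dimensional Hausdorff
measure restricted to the simplex and normalized to total mass 1. -/
noncomputable def simplexUniform (m : ℕ) (s : ℝ) : Measure (EuclideanSpace ℝ (Fin m)) :=
  (μH[(m : ℝ) - 1] (simplex m s))⁻¹ • (μH[(m : ℝ) - 1]).restrict (simplex m s)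

/-- The indicator `F_i` of the event `y_i ≤ T²`. -/
noncomputable def Find (m : ℕ) (T : ℝ) (i : Fin m) (y : EuclideanSpace ℝ (Fin m)) : ℝ :=
  if y i ≤ T ^ 2 then 1 else 0

open scoped Pointwise ENNReal NNReal Topology

lemma simplex_smul (m : ℕ) {c s : ℝ} (hc : 0 < c) :
    c • simplex m s = simplex m (c * s) := by
  ext y
  rw [Set.mem_smul_set_iff_inv_smul_mem₀ hc.ne']
  simp only [simplex, Set.mem_setOf_eq, PiLp.smul_apply, smul_eq_mul]
  constructor
  · rintro ⟨h1, h2⟩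
    refine ⟨fun j => ?_, ?_⟩
    · have := h1 j
      have hci : 0 < c⁻¹ := inv_pos.mpr hc
      nlinarith [this, hci]
    · rw [← Finset.mul_sum] at h2
      field_simp at h2
      linarith [h2]
  · rintro ⟨h1, h2⟩
    refine ⟨fun j => ?_, ?_⟩
    · have := h1 j
      positivity
    · rw [← Finset.mul_sum, h2]
      field_simp

lemma hausdorff_simplex_scale (m : ℕ) (hm : 1 ≤ m) {u s : ℝ} (hu : 0 < u) (hs : 0 < s) :
    μH[(m : ℝ) - 1] (simplex m u)
      = ENNReal.ofReal ((u / s) ^ (m - 1)) * μH[(m : ℝ) - 1] (simplex m s) := by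
  have hr : (0:ℝ) < u / s := div_pos hu hs
  have h1 : simplex m u = (u / s) • simplex m s := by
    rw [simplex_smul m hr]
    congr 1
    field_simp
  have hd : (0:ℝ) ≤ (m : ℝ) - 1 := by
    have : (1:ℝ) ≤ (m:ℝ) := by exact_mod_cast hm
    linarith
  rw [h1, MeasureTheory.Measure.hausdorffMeasure_smul₀ hd hr.ne' (simplex m s)]
  congr 1
  have hcast : (m : ℝ) - 1 = ((m - 1 : ℕ) : ℝ) := by
    have := Nat.cast_sub hm (R := ℝ)
    simp [this]
  rw [hcast, NNReal.rpow_natCast, Real.toNNReal_pow hr.le,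
    Real.nnnorm_of_nonneg hr.le]
  ext
  simp [Real.toNNReal, hr.le, max_eq_left]

lemma simplex_section (m : ℕ) {s : ℝ} (c : EuclideanSpace ℝ (Fin m)) (hc : ∀ k, 0 ≤ c k) :
    {y | y ∈ simplex m s ∧ ∀ k, c k ≤ y k} = c +ᵥ simplex m (s - ∑ k, c k) := by
  ext y
  rw [Set.mem_vadd_set_iff_neg_vadd_mem]
  simp only [simplex, Set.mem_setOf_eq, vadd_eq_add, PiLp.add_apply, PiLp.neg_apply]
  constructor
  · rintro ⟨⟨h1, h2⟩, h3⟩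
    refine ⟨fun j => by linarith [h3 j], ?_⟩
    rw [Finset.sum_add_distrib, Finset.sum_neg_distrib, h2]
    ring
  · rintro ⟨h1, h2⟩
    have h3 : ∀ k, c k ≤ y k := fun k => by linarith [h1 k]
    refine ⟨⟨fun j => le_trans (hc j) (h3 j), ?_⟩, h3⟩
    rw [Finset.sum_add_distrib, Finset.sum_neg_distrib] at h2
    linarith [h2]

lemma hausdorff_simplex_section (m : ℕ) (hm : 1 ≤ m) {s : ℝ} (hs : 0 < s)
    (c : EuclideanSpace ℝ (Fin m)) (hc : ∀ k, 0 ≤ c k) (hcs : ∑ k, c k < s) :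
    μH[(m : ℝ) - 1] {y | y ∈ simplex m s ∧ ∀ k, c k ≤ y k}
      = ENNReal.ofReal (((s - ∑ k, c k) / s) ^ (m - 1)) * μH[(m : ℝ) - 1] (simplex m s) := by
  rw [simplex_section m c hc,
    MeasureTheory.hausdorffMeasure_vadd c (Or.inl (by
      have : (1:ℝ) ≤ (m:ℝ) := by exact_mod_cast hm
      linarith)) _,
    hausdorff_simplex_scale m hm (by linarith) hs]

lemma euclid_coord_dist {m : ℕ} (y z : EuclideanSpace ℝ (Fin m)) (k : Fin m) :
    dist (y k) (z k) ≤ dist y z := by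
  rw [EuclideanSpace.dist_eq]
  have h := Finset.single_le_sum (f := fun i => dist (y i) (z i) ^ 2)
    (fun i _ => sq_nonneg _) (Finset.mem_univ k)
  calc dist (y k) (z k) = √(dist (y k) (z k) ^ 2) := (Real.sqrt_sq dist_nonneg).symm
    _ ≤ √(∑ i, dist (y i) (z i) ^ 2) := Real.sqrt_le_sqrt h

/-- The "drop last coordinate" map is 1-Lipschitz. -/
lemma lipschitz_drop (n : ℕ) :
    LipschitzWith 1 (fun (y : EuclideanSpace ℝ (Fin (n + 1))) (i : Fin n) => y i.castSucc) := by
  apply LipschitzWith.of_dist_le_mul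
  intro y z
  rw [NNReal.coe_one, one_mul]
  rw [dist_pi_le_iff dist_nonneg]
  intro i
  exact euclid_coord_dist y z i.castSucc

/-- Parametrization of the hyperplane by the first `n` coordinates. -/
def param (n : ℕ) (s : ℝ) (x : Fin n → ℝ) : EuclideanSpace ℝ (Fin (n + 1)) :=
  WithLp.toLp 2 (fun k => if h : (k : ℕ) < n then x ⟨k, h⟩ else s - ∑ i, x i)

lemma param_castSucc (n : ℕ) (s : ℝ) (x : Fin n → ℝ) (i : Fin n) :
    param n s x i.castSucc = x i := by
  simp only [param, PiLp.toLp_apply, Fin.coe_castSucc, i.isLt, dif_pos]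

lemma param_last (n : ℕ) (s : ℝ) (x : Fin n → ℝ) :
    param n s x (Fin.last n) = s - ∑ i, x i := by
  simp [param, PiLp.toLp_apply]

lemma lipschitz_param (n : ℕ) (s : ℝ) :
    LipschitzWith ((n + 1 : NNReal) ^ 2) (param n s) := by
  apply LipschitzWith.of_dist_le_mul
  intro x y
  have hD : ∀ k : Fin (n + 1), dist (param n s x k) (param n s y k)
      ≤ ((n : ℝ) + 1) * dist x y := by
    intro k
    by_cases h : (k : ℕ) < n
    · simp only [param, PiLp.toLp_apply, dif_pos h]
      have h1 : dist (x ⟨k, h⟩) (y ⟨k, h⟩) ≤ dist x y := dist_le_pi_dist x y _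
      have h2 : (0:ℝ) ≤ dist x y := dist_nonneg
      nlinarith
    · simp only [param, PiLp.toLp_apply, dif_neg h]
      rw [Real.dist_eq]
      have h1 : s - ∑ i, x i - (s - ∑ i, y i) = ∑ i, (y i - x i) := by
        rw [Finset.sum_sub_distrib]; ring
      rw [h1]
      calc |∑ i, (y i - x i)| ≤ ∑ i, |y i - x i| := Finset.abs_sum_le_sum_abs _ _
        _ ≤ ∑ _i : Fin n, dist x y := by
            refine Finset.sum_le_sum fun i _ => ?_
            rw [abs_sub_comm, ← Real.dist_eq]
            exact dist_le_pi_dist x y i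
        _ = n * dist x y := by simp [mul_comm]
        _ ≤ ((n : ℝ) + 1) * dist x y := by
            have : (0:ℝ) ≤ dist x y := dist_nonneg
            nlinarith
  rw [EuclideanSpace.dist_eq]
  have hb : ∑ k : Fin (n + 1), dist (param n s x k) (param n s y k) ^ 2
      ≤ (((n : ℝ) + 1) ^ 2 * dist x y) ^ 2 := by
    calc ∑ k : Fin (n + 1), dist (param n s x k) (param n s y k) ^ 2
        ≤ ∑ _k : Fin (n + 1), (((n : ℝ) + 1) * dist x y) ^ 2 := by
          refine Finset.sum_le_sum fun k _ => ?_
          have := hD k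
          nlinarith [dist_nonneg (x := param n s x k) (y := param n s y k)]
      _ = ((n : ℝ) + 1) * (((n : ℝ) + 1) * dist x y) ^ 2 := by
          simp [Finset.sum_const]
      _ ≤ (((n : ℝ) + 1) ^ 2 * dist x y) ^ 2 := by
          have h2 : (0:ℝ) ≤ dist x y := dist_nonneg
          have h3 : (1:ℝ) ≤ (n : ℝ) + 1 := by
            have : (0:ℝ) ≤ (n : ℝ) := Nat.cast_nonneg n
            linarith
          nlinarith
  calc √(∑ k : Fin (n + 1), dist (param n s x k) (param n s y k) ^ 2)
      ≤ √((((n : ℝ) + 1) ^ 2 * dist x y) ^ 2) := Real.sqrt_le_sqrt hb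
    _ = ((n : ℝ) + 1) ^ 2 * dist x y := Real.sqrt_sq (by positivity)
    _ = ↑((n + 1 : NNReal) ^ 2) * dist x y := by push_cast; ring

lemma simplex_subset_param_image (n : ℕ) {s : ℝ} (hs : 0 ≤ s) :
    simplex (n + 1) s ⊆ param n s '' (Set.pi Set.univ fun _ : Fin n => Set.Icc 0 s) := by
  intro y hy
  obtain ⟨h1, h2⟩ := hy
  refine ⟨fun i => y i.castSucc, fun i _ => ?_, ?_⟩
  · refine ⟨h1 _, ?_⟩
    rw [← h2]
    exact Finset.single_le_sum (f := fun k => y k) (fun k _ => h1 k) (Finset.mem_univ _)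
  · ext k
    by_cases h : (k : ℕ) < n
    · have hk : k = (⟨k, h⟩ : Fin n).castSucc := by ext; rfl
      rw [hk, param_castSucc]
    · have hk : k = Fin.last n := by
        ext
        simp only [Fin.val_last]
        omega
      subst hk
      rw [param_last]
      have h3 := Fin.sum_univ_castSucc (f := fun k => y k)
      rw [h3] at h2
      linarith

lemma cube_subset_drop_image (n : ℕ) {s : ℝ} (hs : 0 ≤ s) :
    (Set.pi Set.univ fun _ : Fin n => Set.Icc 0 (s / (n + 1)))
      ⊆ (fun (y : EuclideanSpace ℝ (Fin (n + 1))) (i : Fin n) => y i.castSucc) ''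
        simplex (n + 1) s := by
  intro x hx
  have hx' : ∀ i, 0 ≤ x i ∧ x i ≤ s / (n + 1) := fun i => hx i (Set.mem_univ i)
  have hsum : ∑ i, x i ≤ s := by
    calc ∑ i, x i ≤ ∑ _i : Fin n, s / (n + 1) :=
          Finset.sum_le_sum fun i _ => (hx' i).2
      _ = n * (s / (n + 1)) := by simp [mul_comm]
      _ ≤ s := by
          have h0 : (0:ℝ) ≤ (n:ℝ) := Nat.cast_nonneg n
          have h1 : (0:ℝ) < (n:ℝ) + 1 := by linarith
          rw [mul_div_assoc', div_le_iff₀ h1]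
          nlinarith
  refine ⟨param n s x, ⟨fun k => ?_, ?_⟩, ?_⟩
  · by_cases h : (k : ℕ) < n
    · have hk : k = (⟨k, h⟩ : Fin n).castSucc := by ext; rfl
      rw [hk, param_castSucc]
      exact (hx' _).1
    · have hk : k = Fin.last n := by
        ext
        simp only [Fin.val_last]
        omega
      subst hk
      rw [param_last]
      linarith
  · rw [Fin.sum_univ_castSucc (f := fun k => param n s x k)]
    simp only [param_castSucc, param_last]
    ring
  · funext i
    exact param_castSucc n s x i

lemma hausdorff_pi_fin (n : ℕ) : (μH[(n : ℝ)] : Measure (Fin n → ℝ)) = volume := by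
  simpa using MeasureTheory.hausdorffMeasure_pi_real (ι := Fin n)

lemma hausdorff_simplex_lt_top (n : ℕ) {s : ℝ} (hs : 0 ≤ s) :
    μH[(n : ℝ)] (simplex (n + 1) s) < ⊤ := by
  have hd : (0:ℝ) ≤ (n : ℝ) := Nat.cast_nonneg n
  calc μH[(n : ℝ)] (simplex (n + 1) s)
      ≤ μH[(n : ℝ)] (param n s '' (Set.pi Set.univ fun _ : Fin n => Set.Icc 0 s)) :=
        measure_mono (simplex_subset_param_image n hs)
    _ ≤ ((((n + 1 : NNReal) ^ 2) : ℝ≥0∞) ^ (n : ℝ)) *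
          μH[(n : ℝ)] (Set.pi Set.univ fun _ : Fin n => Set.Icc 0 s) :=
        (lipschitz_param n s).hausdorffMeasure_image_le hd _
    _ < ⊤ := by
        rw [hausdorff_pi_fin n]
        apply ENNReal.mul_lt_top
        · exact ENNReal.rpow_lt_top_of_nonneg hd (by simp)
        · rw [MeasureTheory.volume_pi_pi]
          simp only [Real.volume_Icc, sub_zero]
          exact ENNReal.prod_lt_top fun i _ => ENNReal.ofReal_lt_top

lemma hausdorff_simplex_pos (n : ℕ) {s : ℝ} (hs : 0 < s) :
    0 < μH[(n : ℝ)] (simplex (n + 1) s) := by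
  have hd : (0:ℝ) ≤ (n : ℝ) := Nat.cast_nonneg n
  have h1 : (0 : ℝ≥0∞) < μH[(n : ℝ)]
      (Set.pi Set.univ fun _ : Fin n => Set.Icc 0 (s / (n + 1))) := by
    rw [hausdorff_pi_fin n, MeasureTheory.volume_pi_pi]
    simp only [Real.volume_Icc, sub_zero]
    rw [Finset.prod_const]
    apply ENNReal.pow_pos
    rw [ENNReal.ofReal_pos]
    positivity
  by_contra hcon
  push_neg at hcon
  have h0 : μH[(n : ℝ)] (simplex (n + 1) s) = 0 := le_antisymm hcon bot_le
  have h2 : μH[(n : ℝ)]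
      ((fun (y : EuclideanSpace ℝ (Fin (n + 1))) (i : Fin n) => y i.castSucc) ''
        simplex (n + 1) s) ≤ (1 : ℝ≥0∞) ^ (n : ℝ) * μH[(n : ℝ)] (simplex (n + 1) s) :=
    (lipschitz_drop n).hausdorffMeasure_image_le hd _
  rw [h0, mul_zero] at h2
  have h3 := le_trans (measure_mono (cube_subset_drop_image n hs.le)) h2
  exact absurd (le_antisymm h3 bot_le) h1.ne'

lemma measure_simplex_gt (m : ℕ) (hm : 1 ≤ m) {s : ℝ} (hs : 0 < s) (K : Finset (Fin m))
    {t : ℝ} (ht : 0 ≤ t) (hts : (K.card : ℝ) * t < s) :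
    μH[(m : ℝ) - 1] {y | y ∈ simplex m s ∧ ∀ k ∈ K, t < y k}
      = ENNReal.ofReal (((s - (K.card : ℝ) * t) / s) ^ (m - 1))
          * μH[(m : ℝ) - 1] (simplex m s) := by
  set μ := (μH[(m : ℝ) - 1] : Measure (EuclideanSpace ℝ (Fin m))) with hμ
  set κ := (K.card : ℝ) with hκ
  have hκ0 : 0 ≤ κ := Nat.cast_nonneg _
  set δ := s - κ * t with hδ
  have hδ0 : 0 < δ := by simp only [hδ]; linarith
  set u : ℕ → ℝ := fun ℓ => t + δ / (κ + 1) * (1 / (ℓ + 1)) with hu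
  have hupos : ∀ ℓ, t < u ℓ := by
    intro ℓ
    have : 0 < δ / (κ + 1) * (1 / ((ℓ:ℝ) + 1)) := by positivity
    simp only [hu]; linarith
  have huanti : ∀ ℓ ℓ' : ℕ, ℓ ≤ ℓ' → u ℓ' ≤ u ℓ := by
    intro a b hab
    have h1 : (1:ℝ) / ((b:ℝ) + 1) ≤ 1 / ((a:ℝ) + 1) := by
      apply one_div_le_one_div_of_le (by positivity)
      have : (a:ℝ) ≤ (b:ℝ) := Nat.cast_le.mpr hab
      linarith
    have h2 : (0:ℝ) ≤ δ / (κ + 1) := by positivity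
    simp only [hu]
    nlinarith
  have hus : ∀ ℓ, κ * u ℓ < s := by
    intro ℓ
    have h1 : (1:ℝ) / ((ℓ:ℝ) + 1) ≤ 1 := by
      rw [div_le_one (by positivity)]
      have : (0:ℝ) ≤ (ℓ:ℝ) := Nat.cast_nonneg _
      linarith
    have h2 : κ * (δ / (κ + 1)) < δ := by
      rw [mul_div_assoc', div_lt_iff₀ (by positivity)]
      nlinarith
    have h3 : κ * (δ / (κ + 1) * (1 / ((ℓ:ℝ) + 1))) ≤ κ * (δ / (κ + 1)) := by
      have h4 : (0:ℝ) ≤ δ / (κ + 1) := by positivity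
      have h5 : δ / (κ + 1) * (1 / ((ℓ:ℝ) + 1)) ≤ δ / (κ + 1) := by nlinarith
      nlinarith
    simp only [hu, hδ] at *
    nlinarith
  set E : ℕ → Set (EuclideanSpace ℝ (Fin m)) :=
    fun ℓ => {y | y ∈ simplex m s ∧ ∀ k ∈ K, u ℓ ≤ y k} with hE
  have hmono : Monotone E := by
    intro a b hab y hy
    exact ⟨hy.1, fun k hk => le_trans (huanti a b hab) (hy.2 k hk)⟩
  have hunion : (⋃ ℓ, E ℓ) = {y | y ∈ simplex m s ∧ ∀ k ∈ K, t < y k} := by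
    ext y
    simp only [Set.mem_iUnion, hE, Set.mem_setOf_eq]
    constructor
    · rintro ⟨ℓ, h1, h2⟩
      exact ⟨h1, fun k hk => lt_of_lt_of_le (hupos ℓ) (h2 k hk)⟩
    · rintro ⟨h1, h2⟩
      by_cases hK : K.Nonempty
      · obtain ⟨k₀, hk₀, hmin⟩ := K.exists_min_image (fun k => y k) hK
        set ε := y k₀ - t with hε
        have hε0 : 0 < ε := by simp only [hε]; linarith [h2 k₀ hk₀]
        obtain ⟨N, hN⟩ := exists_nat_ge (δ / (κ + 1) / ε)
        refine ⟨N, h1, fun k hk => ?_⟩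
        have h3 : δ / (κ + 1) / ε ≤ (N:ℝ) + 1 := by
          have : (0:ℝ) ≤ (N:ℝ) := Nat.cast_nonneg _
          linarith
        have h4 : δ / (κ + 1) * (1 / ((N:ℝ) + 1)) ≤ ε := by
          rw [div_le_iff₀ hε0] at h3
          rw [mul_one_div, div_le_iff₀ (by positivity : (0:ℝ) < (N:ℝ) + 1)]
          nlinarith
        have h5 : u N ≤ y k₀ := by simp only [hu]; linarith
        exact le_trans h5 (hmin k hk)
      · rw [Finset.not_nonempty_iff_eq_empty] at hK
        subst hK
        exact ⟨0, h1, fun k hk => absurd hk (Finset.notMem_empty k)⟩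
  have hEμ : ∀ ℓ, μ (E ℓ) = ENNReal.ofReal (((s - κ * u ℓ) / s) ^ (m - 1)) * μ (simplex m s) := by
    intro ℓ
    set c : EuclideanSpace ℝ (Fin m) := WithLp.toLp 2 (fun k => if k ∈ K then u ℓ else 0) with hc
    have hc0 : ∀ k, 0 ≤ c k := by
      intro k
      simp only [hc, PiLp.toLp_apply]
      split
      · linarith [hupos ℓ, ht]
      · exact le_refl 0
    have hcsum : ∑ k, c k = κ * u ℓ := by
      simp only [hc, PiLp.toLp_apply]
      rw [Finset.sum_ite_mem, Finset.univ_inter, Finset.sum_const, nsmul_eq_mul]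
    have hEc : E ℓ = {y | y ∈ simplex m s ∧ ∀ k, c k ≤ y k} := by
      ext y
      simp only [hE, Set.mem_setOf_eq, hc, PiLp.toLp_apply]
      constructor
      · rintro ⟨h1, h2⟩
        refine ⟨h1, fun k => ?_⟩
        split
        · exact h2 k (by assumption)
        · exact h1.1 k
      · rintro ⟨h1, h2⟩
        refine ⟨h1, fun k hk => ?_⟩
        have := h2 k
        rwa [if_pos hk] at this
    rw [hEc, hμ, hausdorff_simplex_section m hm hs c hc0 (by rw [hcsum]; exact hus ℓ), hcsum]
  have hlim1 : Filter.Tendsto (fun ℓ => μ (E ℓ)) Filter.atTop (𝓝 (μ (⋃ ℓ, E ℓ))) :=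
    MeasureTheory.tendsto_measure_iUnion_atTop hmono
  have hlim2 : Filter.Tendsto (fun ℓ => μ (E ℓ)) Filter.atTop
      (𝓝 (ENNReal.ofReal (((s - κ * t) / s) ^ (m - 1)) * μ (simplex m s))) := by
    simp only [hEμ]
    have hane : ENNReal.ofReal (((s - κ * t) / s) ^ (m - 1)) ≠ 0 := by
      rw [ne_eq, ENNReal.ofReal_eq_zero, not_le]
      positivity
    apply ENNReal.Tendsto.mul_const _ (Or.inl hane)
    apply (ENNReal.continuous_ofReal.tendsto _).comp
    have h6 : Filter.Tendsto u Filter.atTop (𝓝 t) := by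
      have h7 : Filter.Tendsto (fun ℓ : ℕ => 1 / ((ℓ:ℝ) + 1)) Filter.atTop (𝓝 0) :=
        tendsto_one_div_add_atTop_nhds_zero_nat
      have h8 := h7.const_mul (δ / (κ + 1))
      rw [mul_zero] at h8
      have h9 := h8.const_add t
      rw [add_zero] at h9
      simpa only [hu, mul_comm] using h9
    have h10 : Filter.Tendsto (fun ℓ => (s - κ * u ℓ) / s) Filter.atTop
        (𝓝 ((s - κ * t) / s)) := ((h6.const_mul κ).const_sub s).div_const s
    exact h10.pow (m - 1)
  rw [← hunion, hδ]
  exact tendsto_nhds_unique hlim1 hlim2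

lemma continuous_coord {m : ℕ} (k : Fin m) :
    Continuous fun y : EuclideanSpace ℝ (Fin m) => y k :=
  (EuclideanSpace.proj k).continuous

lemma measurableSet_simplex (m : ℕ) (s : ℝ) : MeasurableSet (simplex m s) := by
  have h1 : simplex m s
      = (⋂ k, {y : EuclideanSpace ℝ (Fin m) | 0 ≤ y k}) ∩ {y | ∑ k, y k = s} := by
    ext y
    simp [simplex, Set.mem_iInter]
  rw [h1]
  refine MeasurableSet.inter (MeasurableSet.iInter fun k => ?_) ?_
  · exact (isClosed_le continuous_const (continuous_coord k)).measurableSet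
  · exact (isClosed_eq (continuous_finset_sum _ fun k _ => continuous_coord k)
      continuous_const).measurableSet


/-- On the simplex `{y : y_j ≥ 0, ∑ y_j = 2m²}` with the uniform probability measure,
the covariance `E[F_i·F_j] − E[F_i]·E[F_j]` of the indicators of `{y_i ≤ T²}` and
`{y_j ≤ T²}` (`i ≠ j`) equals `(1 − T²/m²)^{m-1} − (1 − T²/(2m²))^{2m-2}`. -/
theorem covariance_indicators_simplex (m : ℕ) (hm : 2 ≤ m) (T : ℝ)
    (hT0 : 0 ≤ T ^ 2) (hT : T ^ 2 ≤ (m : ℝ) ^ 2) (i j : Fin m) (hij : i ≠ j) :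
    (∫ y, Find m T i y * Find m T j y ∂(simplexUniform m (2 * (m : ℝ) ^ 2))) -
        (∫ y, Find m T i y ∂(simplexUniform m (2 * (m : ℝ) ^ 2))) *
          (∫ y, Find m T j y ∂(simplexUniform m (2 * (m : ℝ) ^ 2))) =
      (1 - T ^ 2 / (m : ℝ) ^ 2) ^ (m - 1) -
        (1 - T ^ 2 / (2 * (m : ℝ) ^ 2)) ^ (2 * m - 2) := by
  obtain ⟨n, rfl⟩ : ∃ n, m = n + 1 := ⟨m - 1, by omega⟩
  have hn : 1 ≤ n := by omega
  set mr : ℝ := ((n + 1 : ℕ) : ℝ) with hmr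
  have hmr1 : (1:ℝ) ≤ mr := by
    rw [hmr]
    exact_mod_cast Nat.succ_le_succ (Nat.zero_le n)
  set s : ℝ := 2 * mr ^ 2 with hs
  have hs0 : (0:ℝ) < s := by positivity
  set t : ℝ := T ^ 2 with htdef
  have hts : t < s := by
    rw [hs]
    nlinarith
  set μ := (μH[((n + 1 : ℕ) : ℝ) - 1] : Measure (EuclideanSpace ℝ (Fin (n + 1)))) with hμ
  set W := μ (simplex (n + 1) s) with hW
  have hexp : ((n + 1 : ℕ) : ℝ) - 1 = (n : ℝ) := by push_cast; ring
  have hμn : μ = (μH[(n : ℝ)] : Measure (EuclideanSpace ℝ (Fin (n + 1)))) := by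
    rw [hμ, hexp]
  have hW0 : W ≠ 0 := by
    rw [hW, hμn]
    exact (hausdorff_simplex_pos n hs0).ne'
  have hWtop : W ≠ ⊤ := by
    rw [hW, hμn]
    exact (hausdorff_simplex_lt_top n hs0.le).ne
  set P := simplexUniform (n + 1) s with hP
  have hPapp : ∀ E : Set (EuclideanSpace ℝ (Fin (n + 1))), MeasurableSet E →
      P E = W⁻¹ * μ (E ∩ simplex (n + 1) s) := by
    intro E hE
    rw [hP, simplexUniform, Measure.smul_apply, Measure.restrict_apply hE, smul_eq_mul]
  have hPuniv : P Set.univ = 1 := by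
    rw [hPapp Set.univ MeasurableSet.univ, Set.univ_inter, ← hW]
    exact ENNReal.inv_mul_cancel hW0 hWtop
  haveI : IsProbabilityMeasure P := ⟨hPuniv⟩
  -- events
  set A : Set (EuclideanSpace ℝ (Fin (n + 1))) := {y | t < y i} with hA
  set B : Set (EuclideanSpace ℝ (Fin (n + 1))) := {y | t < y j} with hB
  have hAm : MeasurableSet A := (isOpen_lt continuous_const (continuous_coord i)).measurableSet
  have hBm : MeasurableSet B := (isOpen_lt continuous_const (continuous_coord j)).measurableSet
  set a : ℝ := ((s - t) / s) ^ n with ha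
  set b : ℝ := ((s - 2 * t) / s) ^ n with hb
  have ha0 : 0 ≤ a := by
    have h' : 0 ≤ (s - t) / s := div_nonneg (by linarith) hs0.le
    positivity
  have hb0 : 0 ≤ b := by
    have h2ts : 0 ≤ s - 2 * t := by
      rw [hs]
      nlinarith
    have h2ts' : 0 ≤ (s - 2 * t) / s := div_nonneg h2ts hs0.le
    positivity
  -- measure of single-coordinate strict event
  have hkey : ∀ k : Fin (n + 1), P {y | t < y k} = ENNReal.ofReal a := by
    intro k
    have hEq : {y : EuclideanSpace ℝ (Fin (n + 1)) | t < y k} ∩ simplex (n + 1) s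
        = {y | y ∈ simplex (n + 1) s ∧ ∀ k' ∈ ({k} : Finset (Fin (n + 1))), t < y k'} := by
      ext y
      simp [Set.mem_inter_iff, and_comm]
    have hmeasA := measure_simplex_gt (n + 1) (by omega) hs0 ({k} : Finset (Fin (n + 1)))
      hT0 (by simp; linarith)
    rw [← hμ] at hmeasA
    simp only [Finset.card_singleton, Nat.cast_one, one_mul, Nat.add_sub_cancel] at hmeasA
    rw [hPapp _ ((isOpen_lt continuous_const (continuous_coord k)).measurableSet), hEq, hmeasA,
      ← hW, ← ha, mul_comm (ENNReal.ofReal a) W, ← mul_assoc,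
      ENNReal.inv_mul_cancel hW0 hWtop, one_mul]
  -- measure of the two-coordinate strict event
  have hkey2 : P (A ∩ B) = ENNReal.ofReal b := by
    have hEq : A ∩ B ∩ simplex (n + 1) s
        = {y | y ∈ simplex (n + 1) s ∧ ∀ k' ∈ ({i, j} : Finset (Fin (n + 1))), t < y k'} := by
      ext y
      simp only [hA, hB, Set.mem_inter_iff, Set.mem_setOf_eq, Finset.mem_insert,
        Finset.mem_singleton]
      constructor
      · rintro ⟨⟨h1, h2⟩, h3⟩
        exact ⟨h3, fun k' hk' => by rcases hk' with rfl | rfl <;> assumption⟩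
      · rintro ⟨h1, h2⟩
        exact ⟨⟨h2 i (Or.inl rfl), h2 j (Or.inr rfl)⟩, h1⟩
    have hcard : ({i, j} : Finset (Fin (n + 1))).card = 2 := by
      rw [Finset.card_insert_of_notMem (by simpa using hij), Finset.card_singleton]
    have h2le : 2 * t ≤ s := by
      rw [hs]
      nlinarith
    rcases lt_or_eq_of_le h2le with h2t | h2t
    · have hmeasAB := measure_simplex_gt (n + 1) (by omega) hs0 ({i, j} : Finset (Fin (n + 1)))
        hT0 (by rw [hcard]; push_cast; linarith)
      rw [← hμ, hcard] at hmeasAB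
      simp only [Nat.cast_ofNat, Nat.add_sub_cancel] at hmeasAB
      have hbb : ((s - 2 * t) / s) ^ n = b := by rw [hb]
      rw [hPapp _ (hAm.inter hBm), hEq, hmeasAB, ← hW]
      rw [show ENNReal.ofReal (((s - (2:ℝ) * t) / s) ^ n) = ENNReal.ofReal b by rw [hbb]]
      rw [mul_comm (ENNReal.ofReal b) W, ← mul_assoc, ENNReal.inv_mul_cancel hW0 hWtop, one_mul]
    · -- boundary case `2t = s`: the event is empty and `b = 0`
      have hbz : b = 0 := by
        rw [hb, ← h2t]
        simp only [sub_self, zero_div]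
        exact zero_pow (by omega)
      have hempty : A ∩ B ∩ simplex (n + 1) s = ∅ := by
        ext y
        simp only [hA, hB, Set.mem_inter_iff, Set.mem_setOf_eq, Set.mem_empty_iff_false,
          iff_false, not_and]
        rintro ⟨hyi, hyj⟩ ⟨h3, h4⟩
        have h5 : y i + y j ≤ ∑ k, y k := by
          have := Finset.sum_le_sum_of_subset_of_nonneg
            (Finset.subset_univ ({i, j} : Finset (Fin (n + 1)))) (fun k _ _ => h3 k)
          rwa [Finset.sum_insert (by simpa using hij), Finset.sum_singleton] at this
        rw [h4, ← h2t] at h5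
        linarith
      rw [hPapp _ (hAm.inter hBm), hempty, measure_empty, mul_zero, hbz, ENNReal.ofReal_zero]
  -- real-valued probabilities
  have hArt : (P A).toReal = a := by rw [hkey i, ENNReal.toReal_ofReal ha0]
  have hBrt : (P B).toReal = a := by rw [hkey j, ENNReal.toReal_ofReal ha0]
  have hABrt : (P (A ∩ B)).toReal = b := by rw [hkey2, ENNReal.toReal_ofReal hb0]
  have hcomp : ∀ S : Set (EuclideanSpace ℝ (Fin (n + 1))), MeasurableSet S →
      (P Sᶜ).toReal = 1 - (P S).toReal := by
    intro S hS
    rw [measure_compl hS (measure_ne_top P S), hPuniv,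
      ENNReal.toReal_sub_of_le prob_le_one ENNReal.one_ne_top, ENNReal.toReal_one]
  have hUrt : (P (A ∪ B)).toReal = 2 * a - b := by
    have h := measure_union_add_inter A hBm (μ := P)
    have h' := congrArg ENNReal.toReal h
    rw [ENNReal.toReal_add (measure_ne_top P _) (measure_ne_top P _),
      ENNReal.toReal_add (measure_ne_top P _) (measure_ne_top P _),
      hArt, hBrt, hABrt] at h'
    linarith
  -- rewrite the integrals as probabilities
  have hLi : {y : EuclideanSpace ℝ (Fin (n + 1)) | y i ≤ t} = Aᶜ := by
    ext y
    simp [hA, not_lt]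
  have hLj : {y : EuclideanSpace ℝ (Fin (n + 1)) | y j ≤ t} = Bᶜ := by
    ext y
    simp [hB, not_lt]
  have hFind : ∀ k : Fin (n + 1), Find (n + 1) T k
      = Set.indicator {y : EuclideanSpace ℝ (Fin (n + 1)) | y k ≤ t} (fun _ => (1:ℝ)) := by
    intro k
    funext y
    simp only [Find, Set.indicator_apply, Set.mem_setOf_eq, htdef]
  have hint : ∀ k : Fin (n + 1), (∫ y, Find (n + 1) T k y ∂P)
      = (P {y : EuclideanSpace ℝ (Fin (n + 1)) | y k ≤ t}).toReal := by
    intro k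
    have hmk : MeasurableSet {y : EuclideanSpace ℝ (Fin (n + 1)) | y k ≤ t} :=
      (isClosed_le (continuous_coord k) continuous_const).measurableSet
    rw [hFind k, MeasureTheory.integral_indicator_const (1:ℝ) hmk, smul_eq_mul, mul_one, measureReal_def]
  have hprodind : (fun y => Find (n + 1) T i y * Find (n + 1) T j y)
      = Set.indicator ({y : EuclideanSpace ℝ (Fin (n + 1)) | y i ≤ t}
          ∩ {y | y j ≤ t}) (fun _ => (1:ℝ)) := by
    funext y
    simp only [Find, Set.indicator_apply, Set.mem_inter_iff, Set.mem_setOf_eq, htdef]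
    by_cases h1 : y i ≤ T ^ 2 <;> by_cases h2 : y j ≤ T ^ 2 <;> simp [h1, h2]
  have hintprod : (∫ y, Find (n + 1) T i y * Find (n + 1) T j y ∂P)
      = (P ({y : EuclideanSpace ℝ (Fin (n + 1)) | y i ≤ t} ∩ {y | y j ≤ t})).toReal := by
    have hmk : MeasurableSet ({y : EuclideanSpace ℝ (Fin (n + 1)) | y i ≤ t}
        ∩ {y | y j ≤ t}) :=
      ((isClosed_le (continuous_coord i) continuous_const).measurableSet).inter
        ((isClosed_le (continuous_coord j) continuous_const).measurableSet)
    rw [hprodind, MeasureTheory.integral_indicator_const (1:ℝ) hmk, smul_eq_mul, mul_one, measureReal_def]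
  have hinter : {y : EuclideanSpace ℝ (Fin (n + 1)) | y i ≤ t} ∩ {y | y j ≤ t}
      = (A ∪ B)ᶜ := by
    rw [hLi, hLj, Set.compl_union]
  -- put everything together
  have e1 : (∫ y, Find (n + 1) T i y ∂P) = 1 - a := by
    rw [hint i, hLi, hcomp A hAm, hArt]
  have e2 : (∫ y, Find (n + 1) T j y ∂P) = 1 - a := by
    rw [hint j, hLj, hcomp B hBm, hBrt]
  have e3 : (∫ y, Find (n + 1) T i y * Find (n + 1) T j y ∂P) = 1 - (2 * a - b) := by
    rw [hintprod, hinter, hcomp (A ∪ B) (hAm.union hBm), hUrt]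
  rw [e1, e2, e3]
  -- final algebra
  have hfb : b = (1 - t / mr ^ 2) ^ n := by
    rw [hb, hs]
    congr 1
    have hmr0 : mr ^ 2 ≠ 0 := by positivity
    field_simp
  have hfa : a = (1 - t / (2 * mr ^ 2)) ^ n := by
    rw [ha, hs]
    congr 1
    have hmr0 : mr ^ 2 ≠ 0 := by positivity
    field_simp
  have hexp2 : 2 * (n + 1) - 2 = 2 * n := by omega
  have hexp1 : n + 1 - 1 = n := by omega
  have hfa2 : (1 - t / (2 * mr ^ 2)) ^ (2 * n) = a ^ 2 := by
    rw [hfa, ← pow_mul, Nat.mul_comm]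
  rw [hexp1, hexp2, ← hfb, hfa2]
  ring
end
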